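/- Let n ≥ 2 and let s = (s_1, ..., s_n) be a sequence of positive integers with s_i ≥ s_{i+1} for i = 1, ..., n-1 and s_n ≤ n-1. If s is connected and graphic, then the sequence s' = (s_1 - 1, s_2 - 1, ..., s_{s_n} - 1, s_{s_n+1}, ..., s_{n-1}) of length n-1 (obtained by deleting the last term s_n and subtracting 1 from each of the first s_n terms) is graphic and s'_1 + ... + s'_{n-1} ≥ 2(n-2). -/

import Mathlib

open Finset SimpleGraph

section
variable {n : ℕ}

def togRel (i j v w : Fin n) (a b : Fin n) : Prop :=
  (a = i ∧ b = w) ∨ (a = w ∧ b = i) ∨ (a = j ∧ b = v) ∨ (a = v ∧ b = j) ∨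
  (a = i ∧ b = v) ∨ (a = v ∧ b = i) ∨ (a = j ∧ b = w) ∨ (a = w ∧ b = j)

instance (i j v w : Fin n) : DecidableRel (togRel i j v w) := fun a b => by
  unfold togRel; infer_instance

lemma togRel_symm (i j v w a b : Fin n) : togRel i j v w a b ↔ togRel i j v w b a := by
  unfold togRel; tauto

lemma togRel_irrefl (i j v w a : Fin n) (hiw : i ≠ w) (hjv : j ≠ v) (hiv : i ≠ v)
    (hjw : j ≠ w) : ¬ togRel i j v w a a := by
  unfold togRel
  rintro (⟨h,h'⟩|⟨h,h'⟩|⟨h,h'⟩|⟨h,h'⟩|⟨h,h'⟩|⟨h,h'⟩|⟨h,h'⟩|⟨h,h'⟩) <;> subst h <;> simp_all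

def swapGraph (G : SimpleGraph (Fin n)) (i j v w : Fin n) (hiw : i ≠ w) (hjv : j ≠ v)
    (hiv : i ≠ v) (hjw : j ≠ w) : SimpleGraph (Fin n) where
  Adj a b := Xor' (G.Adj a b) (togRel i j v w a b)
  symm := by
    constructor
    intro a b hab
    rcases hab with ⟨h1, h2⟩ | ⟨h1, h2⟩
    · exact Or.inl ⟨G.adj_symm h1, fun hc => h2 ((togRel_symm i j v w a b).mpr hc)⟩
    · exact Or.inr ⟨(togRel_symm i j v w a b).mp h1, fun hc => h2 (G.adj_symm hc)⟩
  loopless := by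
    constructor
    intro a ha
    rcases ha with ⟨h1, _⟩ | ⟨h1, _⟩
    · exact G.loopless.irrefl a h1
    · exact togRel_irrefl i j v w a hiw hjv hiv hjw h1

instance swapDec (G : SimpleGraph (Fin n)) [DecidableRel G.Adj] (i j v w : Fin n) (h1 : i ≠ w)
    (h2 : j ≠ v) (h3 : i ≠ v) (h4 : j ≠ w) :
    DecidableRel (swapGraph G i j v w h1 h2 h3 h4).Adj := fun _ _ =>
  inferInstanceAs (Decidable (Xor _ _))

lemma swapGraph_adj (G : SimpleGraph (Fin n)) (i j v w : Fin n) (h1 : i ≠ w)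
    (h2 : j ≠ v) (h3 : i ≠ v) (h4 : j ≠ w) (a b : Fin n) :
    (swapGraph G i j v w h1 h2 h3 h4).Adj a b ↔ Xor' (G.Adj a b) (togRel i j v w a b) :=
  Iff.rfl

-- neighbor finset at i
lemma swapGraph_nbhd_i (G : SimpleGraph (Fin n)) [DecidableRel G.Adj] (i j v w : Fin n)
    (h1 : i ≠ w) (h2 : j ≠ v) (h3 : i ≠ v) (h4 : j ≠ w) (hij : i ≠ j) (hvw : v ≠ w)
    (aiw : G.Adj i w) (niv : ¬ G.Adj i v) :
    (swapGraph G i j v w h1 h2 h3 h4).neighborFinset i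
      = insert v ((G.neighborFinset i).erase w) := by
  classical
  ext b
  simp only [mem_neighborFinset, Finset.mem_insert, Finset.mem_erase, swapGraph_adj]
  have ht : togRel i j v w i b ↔ (b = w ∨ b = v) := by
    unfold togRel; simp [h1, h3, hij]
  rw [ht]
  by_cases hbw : b = w
  · subst b; simp [Xor', aiw, hvw.symm]
  · by_cases hbv : b = v
    · subst b; simp [Xor', niv, hbw]
    · simp [Xor', Xor, hbw, hbv]

end

section
variable {n : ℕ}

lemma swapGraph_nbhd_other (G : SimpleGraph (Fin n)) [DecidableRel G.Adj] (i j v w : Fin n)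
    (h1 : i ≠ w) (h2 : j ≠ v) (h3 : i ≠ v) (h4 : j ≠ w) (a : Fin n)
    (hai : a ≠ i) (haj : a ≠ j) (hav : a ≠ v) (haw : a ≠ w) :
    (swapGraph G i j v w h1 h2 h3 h4).neighborFinset a = G.neighborFinset a := by
  classical
  ext b
  simp only [mem_neighborFinset, swapGraph_adj]
  have ht : ¬ togRel i j v w a b := by
    unfold togRel; simp [hai, haj, hav, haw]
  simp [Xor', Xor, ht]

lemma xor_congr_right {p q r : Prop} (h : q ↔ r) : Xor' p q ↔ Xor' p r := by
  unfold Xor' Xor; tauto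

lemma togRel_perm1 (i j v w a b : Fin n) : togRel i j v w a b ↔ togRel j i w v a b := by
  unfold togRel; tauto

lemma togRel_perm2 (i j v w a b : Fin n) : togRel i j v w a b ↔ togRel v w i j a b := by
  unfold togRel; tauto

lemma togRel_perm3 (i j v w a b : Fin n) : togRel i j v w a b ↔ togRel w v j i a b := by
  unfold togRel; tauto

lemma swapGraph_eq1 (G : SimpleGraph (Fin n)) (i j v w : Fin n)
    (h1 : i ≠ w) (h2 : j ≠ v) (h3 : i ≠ v) (h4 : j ≠ w) :
    swapGraph G i j v w h1 h2 h3 h4 = swapGraph G j i w v h2 h1 h4 h3 := by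
  ext a b
  rw [swapGraph_adj, swapGraph_adj]
  exact xor_congr_right (togRel_perm1 i j v w a b)

lemma swapGraph_eq2 (G : SimpleGraph (Fin n)) (i j v w : Fin n)
    (h1 : i ≠ w) (h2 : j ≠ v) (h3 : i ≠ v) (h4 : j ≠ w) :
    swapGraph G i j v w h1 h2 h3 h4 = swapGraph G v w i j h2.symm h1.symm h3.symm h4.symm := by
  ext a b
  rw [swapGraph_adj, swapGraph_adj]
  exact xor_congr_right (togRel_perm2 i j v w a b)

lemma swapGraph_eq3 (G : SimpleGraph (Fin n)) (i j v w : Fin n)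
    (h1 : i ≠ w) (h2 : j ≠ v) (h3 : i ≠ v) (h4 : j ≠ w) :
    swapGraph G i j v w h1 h2 h3 h4 = swapGraph G w v j i h1.symm h2.symm h4.symm h3.symm := by
  ext a b
  rw [swapGraph_adj, swapGraph_adj]
  exact xor_congr_right (togRel_perm3 i j v w a b)

lemma card_insert_erase {α : Type*} [DecidableEq α] {N : Finset α} {x y : α}
    (hx : x ∈ N) (hy : y ∉ N) : (insert y (N.erase x)).card = N.card := by
  rw [Finset.card_insert_of_notMem (fun h => hy (Finset.mem_of_mem_erase h))]
  exact Finset.card_erase_add_one hx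

lemma nbhd_congr {n : ℕ} {H1 H2 : SimpleGraph (Fin n)} [DecidableRel H1.Adj]
    [DecidableRel H2.Adj] (h : H1 = H2) (a : Fin n) :
    H1.neighborFinset a = H2.neighborFinset a := by
  ext b
  rw [SimpleGraph.mem_neighborFinset, SimpleGraph.mem_neighborFinset, h]

lemma swap_step (G : SimpleGraph (Fin n)) [DecidableRel G.Adj]
    (i j v w : Fin n) (hij : i ≠ j) (hiv : i ≠ v) (hiw : i ≠ w) (hjv : j ≠ v)
    (hjw : j ≠ w) (hvw : v ≠ w)
    (aiw : G.Adj i w) (ajv : G.Adj j v) (niv : ¬ G.Adj i v) (njw : ¬ G.Adj j w) :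
    ∃ (H : SimpleGraph (Fin n)) (_ : DecidableRel H.Adj),
      (∀ a, H.degree a = G.degree a) ∧
      H.neighborFinset v = insert i ((G.neighborFinset v).erase j) := by
  classical
  refine ⟨swapGraph G i j v w hiw hjv hiv hjw, swapDec G i j v w hiw hjv hiv hjw, ?_, ?_⟩
  swap
  · rw [nbhd_congr (swapGraph_eq2 G i j v w hiw hjv hiv hjw) v,
      swapGraph_nbhd_i G v w i j hjv.symm hiw.symm hiv.symm hjw.symm
        hvw hij ajv.symm (fun h => niv (G.adj_symm h))]
  -- degrees
  intro a
  by_cases hai : a = i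
  · subst a
    rw [degree, degree, swapGraph_nbhd_i G i j v w hiw hjv hiv hjw hij hvw aiw niv,
      card_insert_erase (by simpa [mem_neighborFinset] using aiw)
        (by simpa [mem_neighborFinset] using niv)]
  by_cases haj : a = j
  · subst a
    rw [degree, degree, nbhd_congr (swapGraph_eq1 G i j v w hiw hjv hiv hjw) j,
      swapGraph_nbhd_i G j i w v hjv hiw hjw hiv hij.symm hvw.symm ajv njw,
      card_insert_erase (by simpa [mem_neighborFinset] using ajv)
        (by simpa [mem_neighborFinset] using njw)]
  by_cases hav : a = v
  · subst a
    rw [degree, degree, nbhd_congr (swapGraph_eq2 G i j v w hiw hjv hiv hjw) v,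
      swapGraph_nbhd_i G v w i j hjv.symm hiw.symm hiv.symm hjw.symm hvw hij
        ajv.symm (fun h => niv (G.adj_symm h)),
      card_insert_erase (by simpa [mem_neighborFinset] using ajv.symm)
        (by simpa [mem_neighborFinset] using (fun h => niv (G.adj_symm h)))]
  by_cases haw : a = w
  · subst a
    rw [degree, degree, nbhd_congr (swapGraph_eq3 G i j v w hiw hjv hiv hjw) w,
      swapGraph_nbhd_i G w v j i hiw.symm hjv.symm hjw.symm hiv.symm hvw.symm hij.symm
        aiw.symm (fun h => njw (G.adj_symm h)),
      card_insert_erase (by simpa [mem_neighborFinset] using aiw.symm)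
        (by simpa [mem_neighborFinset] using (fun h => njw (G.adj_symm h)))]
  rw [degree, degree, swapGraph_nbhd_other G i j v w hiw hjv hiv hjw a hai haj hav haw]
end

lemma card_filter_val_lt (N k : ℕ) (h : k ≤ N) :
    #(univ.filter (fun b : Fin N => b.val < k)) = k := by
  rw [← Finset.card_range k]
  apply Finset.card_bij (fun (b : Fin N) _ => b.val)
  · intro a ha; simp only [mem_filter] at ha; simpa using ha.2
  · intro a _ b _ hab; exact Fin.ext hab
  · intro a ha
    simp only [Finset.mem_range] at ha
    exact ⟨⟨a, lt_of_lt_of_le ha h⟩, by simp [ha], rfl⟩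

lemma conn_bound {n : ℕ} (G : SimpleGraph (Fin n)) [DecidableRel G.Adj] (hc : G.Connected) :
    n - 1 ≤ #G.edgeFinset := by
  classical
  have hne : Nonempty (Fin n) := hc.nonempty
  obtain ⟨r⟩ := hne
  have step : ∀ x : Fin n, x ≠ r → ∃ u, G.Adj x u ∧ G.dist u r < G.dist x r := by
    intro x hx
    have hd : 0 < G.dist x r := hc.pos_dist_of_ne hx
    obtain ⟨p, hlen⟩ := hc.exists_walk_length_eq_dist x r
    cases p with
    | nil => simp at hlen; omega
    | @cons _ u _ h q =>
        refine ⟨u, h, ?_⟩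
        have := G.dist_le q
        simp [SimpleGraph.Walk.length_cons] at hlen
        omega
  choose u hadj hdist using step
  set f : {x : Fin n // x ≠ r} → G.edgeSet :=
    fun x => ⟨s(x.1, u x.1 x.2), G.mem_edgeSet.mpr (hadj x.1 x.2)⟩ with hf
  have hinj : Function.Injective f := by
    intro x y hxy
    have h2 : s(x.1, u x.1 x.2) = s(y.1, u y.1 y.2) := congrArg Subtype.val hxy
    rw [Sym2.eq_iff] at h2
    rcases h2 with ⟨h3, _⟩ | ⟨h3, h4⟩
    · exact Subtype.ext h3
    · exfalso
      have d1 := hdist x.1 x.2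
      have d2 := hdist y.1 y.2
      rw [← h3] at d2
      rw [h4] at d1
      exact absurd d2 (not_lt.mpr (le_of_lt d1))
  have := Fintype.card_le_of_injective f hinj
  have h1 : Fintype.card {x : Fin n // x ≠ r} = n - 1 := by
    simp [Fintype.card_subtype_compl, Fintype.card_fin]
  have h2 : Fintype.card G.edgeSet = #G.edgeFinset := (SimpleGraph.edgeFinset_card (G := G)).symm
  omega

lemma exists_canonical {n : ℕ} (s : Fin n → ℕ) (hmono : Antitone s)
    (v : Fin n) (hv : v.val = n - 1) (hk : s v ≤ n - 1) :
    ∀ m : ℕ, ∀ (G : SimpleGraph (Fin n)), ∀ (_ : DecidableRel G.Adj),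
      (∑ u ∈ G.neighborFinset v, u.val) = m → (∀ a, G.degree a = s a) →
      ∃ (H : SimpleGraph (Fin n)) (_ : DecidableRel H.Adj),
        (∀ a, H.degree a = s a) ∧ ∀ b, H.Adj v b ↔ b.val < s v := by
  intro m
  induction m using Nat.strong_induction_on with
  | _ m IH =>
    intro G instG hm hdeg
    by_cases hdone : ∀ b, G.Adj v b ↔ b.val < s v
    · exact ⟨G, instG, hdeg, hdone⟩
    have hn1 : 1 ≤ n := Fin.pos v
    set k := s v with hkdef
    set N := G.neighborFinset v with hN
    set filt := univ.filter (fun b : Fin n => b.val < k) with hfilt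
    have hNcard : N.card = k := hdeg v
    have hfcard : filt.card = k := card_filter_val_lt n k (le_trans hk (by omega))
    have hNefilt : N ≠ filt := by
      intro h
      apply hdone
      intro b
      rw [← SimpleGraph.mem_neighborFinset, ← hN, h, hfilt]
      simp
    -- get j ∈ N with k ≤ j.val
    have hj : ∃ j ∈ N, k ≤ j.val := by
      by_contra hc
      push_neg at hc
      have hsub : N ⊆ filt := by
        intro x hx
        rw [hfilt]
        simp only [mem_filter, mem_univ, true_and]
        exact hc x hx
      exact hNefilt (Finset.eq_of_subset_of_card_le hsub (by omega))
    have hi : ∃ i, i.val < k ∧ i ∉ N := by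
      by_contra hc
      push_neg at hc
      have hsub : filt ⊆ N := by
        intro x hx
        rw [hfilt] at hx
        simp only [mem_filter, mem_univ, true_and] at hx
        exact hc x hx
      exact hNefilt (Finset.eq_of_subset_of_card_le hsub (by omega)).symm
    obtain ⟨j, hjN, hjk⟩ := hj
    obtain ⟨i, hik, hiN⟩ := hi
    have avj : G.Adj v j := (SimpleGraph.mem_neighborFinset G v j).mp hjN
    have nvi : ¬ G.Adj v i := fun h => hiN ((SimpleGraph.mem_neighborFinset G v i).mpr h)
    have hijval : i.val < j.val := lt_of_lt_of_le hik hjk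
    have hij : i ≠ j := fun h => by rw [h] at hijval; omega
    have hiv : i ≠ v := fun h => by rw [h] at hik; omega
    have hjv : j ≠ v := fun h => (G.loopless.irrefl v (h ▸ avj))
    have hsij : s j ≤ s i := hmono (by exact le_of_lt hijval)
    -- find w
    set Ni := G.neighborFinset i with hNi
    set Nj := G.neighborFinset j with hNj
    have hNicard : Ni.card = s i := hdeg i
    have hNjcard : Nj.card = s j := hdeg j
    have hvNj : v ∈ Nj := (SimpleGraph.mem_neighborFinset G j v).mpr avj.symm
    have hvNi : v ∉ Ni := fun h => nvi (G.adj_symm ((SimpleGraph.mem_neighborFinset G i v).mp h))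
    have hcards : ((Nj.erase i).erase v).card < (Ni.erase j).card := by
      by_cases hadj : G.Adj i j
      · have h1 : j ∈ Ni := (SimpleGraph.mem_neighborFinset G i j).mpr hadj
        have h2 : i ∈ Nj := (SimpleGraph.mem_neighborFinset G j i).mpr hadj.symm
        have h3 : v ∈ Nj.erase i := Finset.mem_erase.mpr ⟨Ne.symm hiv, hvNj⟩
        have c1 : (Ni.erase j).card = s i - 1 := by
          rw [Finset.card_erase_of_mem h1, hNicard]
        have c2 : ((Nj.erase i).erase v).card = s j - 1 - 1 := by
          rw [Finset.card_erase_of_mem h3, Finset.card_erase_of_mem h2, hNjcard]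
        have hj2 : 2 ≤ s j := by
          have : ({i, v} : Finset (Fin n)) ⊆ Nj := by
            intro x hx
            rcases Finset.mem_insert.mp hx with rfl | hx
            · exact h2
            · rwa [Finset.mem_singleton.mp hx]
          have := Finset.card_le_card this
          rwa [Finset.card_insert_of_notMem (by simpa using hiv), Finset.card_singleton,
            hNjcard] at this
        omega
      · have h1 : j ∉ Ni := fun h => hadj ((SimpleGraph.mem_neighborFinset G i j).mp h)
        have h2 : i ∉ Nj := fun h => hadj (G.adj_symm ((SimpleGraph.mem_neighborFinset G j i).mp h))
        have c1 : (Ni.erase j).card = s i := by rw [Finset.erase_eq_of_notMem h1, hNicard]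
        have c2 : ((Nj.erase i).erase v).card = s j - 1 := by
          rw [Finset.erase_eq_of_notMem h2, Finset.card_erase_of_mem hvNj, hNjcard]
        have hj1 : 1 ≤ s j := by
          have := Finset.card_pos.mpr ⟨v, hvNj⟩
          omega
        omega
    have hw : ∃ w ∈ Ni.erase j, w ∉ (Nj.erase i).erase v := by
      by_contra hc
      push_neg at hc
      exact absurd (Finset.card_le_card hc) (by omega)
    obtain ⟨w, hwA, hwB⟩ := hw
    have hwj : w ≠ j := (Finset.mem_erase.mp hwA).1
    have aiw : G.Adj i w := (SimpleGraph.mem_neighborFinset G i w).mp (Finset.mem_erase.mp hwA).2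
    have hiw : i ≠ w := G.ne_of_adj aiw
    have hwv : w ≠ v := by
      intro h
      exact hvNi (h ▸ (Finset.mem_erase.mp hwA).2)
    have hwi : w ≠ i := fun h => hiw h.symm
    have njw : ¬ G.Adj j w := by
      intro h
      exact hwB (Finset.mem_erase.mpr ⟨hwv, Finset.mem_erase.mpr
        ⟨hwi, (SimpleGraph.mem_neighborFinset G j w).mpr h⟩⟩)
    have hjw : j ≠ w := fun h => hwj h.symm
    have hvw : v ≠ w := fun h => hwv h.symm
    obtain ⟨H, instH, hHdeg, hHN⟩ := swap_step G i j v w hij hiv hiw hjv hjw hvw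
      aiw avj.symm (fun h => nvi (G.adj_symm h)) njw
    have hiNe : i ∉ N.erase j := fun h => hiN (Finset.mem_of_mem_erase h)
    have hm' : (∑ u ∈ H.neighborFinset v, u.val) = i.val + ∑ u ∈ N.erase j, u.val := by
      rw [hHN, Finset.sum_insert hiNe]
    have hmold : m = j.val + ∑ u ∈ N.erase j, u.val := by
      rw [← hm, ← Finset.add_sum_erase N (fun u => u.val) hjN]
    exact IH (∑ u ∈ H.neighborFinset v, u.val) (by omega) H instH rfl
      (fun a => (hHdeg a).trans (hdeg a))

/-- A sequence `s` of length `n` is graphic if it is the degree sequence of a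
finite simple graph on `n` vertices. -/
def Graphic (n : ℕ) (s : Fin n → ℕ) : Prop :=
  ∃ G : SimpleGraph (Fin n), ∃ _ : DecidableRel G.Adj, ∀ i, G.degree i = s i

/-- A sequence `s` is connected and graphic if it is the degree sequence of a
connected finite simple graph on `n` vertices. -/
def ConnectedGraphic (n : ℕ) (s : Fin n → ℕ) : Prop :=
  ∃ G : SimpleGraph (Fin n), ∃ _ : DecidableRel G.Adj,
    G.Connected ∧ ∀ i, G.degree i = s i

set_option maxHeartbeats 1000000 in
theorem connected_havel_hakimi_mp (n : ℕ) (hn : 2 ≤ n) (s : Fin n → ℕ)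
    (hpos : ∀ i, 0 < s i) (hmono : Antitone s)
    (hmin : s ⟨n - 1, by omega⟩ ≤ n - 1)
    (s' : Fin (n - 1) → ℕ)
    (hs' : ∀ j : Fin (n - 1),
      s' j = if j.val + 1 ≤ s ⟨n - 1, by omega⟩
             then s ⟨j.val, by omega⟩ - 1
             else s ⟨j.val, by omega⟩) :
    ConnectedGraphic n s → Graphic (n - 1) s' ∧ 2 * (n - 2) ≤ ∑ j, s' j := by
  rintro ⟨G, instG, hconn, hdeg⟩
  classical
  set v : Fin n := ⟨n - 1, by omega⟩ with hv
  set k := s v with hk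
  set emb : Fin (n - 1) → Fin n := fun a => ⟨a.val, by omega⟩ with hemb
  have hembinj : Function.Injective emb := by
    intro a b hab
    have : (emb a).val = (emb b).val := congrArg Fin.val hab
    exact Fin.ext this
  obtain ⟨H, instH, hHdeg, hHadj⟩ := exists_canonical s hmono v rfl hmin
    (∑ u ∈ G.neighborFinset v, u.val) G instG rfl hdeg
  -- the reduced graph
  set G' : SimpleGraph (Fin (n - 1)) := H.comap emb with hG'
  have instG' : DecidableRel G'.Adj := fun a b => instH (emb a) (emb b)
  have key : ∀ a : Fin (n - 1),
      Finset.image emb (G'.neighborFinset a) = (H.neighborFinset (emb a)).erase v := by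
    intro a
    ext b
    simp only [Finset.mem_image, SimpleGraph.mem_neighborFinset, Finset.mem_erase]
    constructor
    · rintro ⟨c, hc, rfl⟩
      refine ⟨?_, hc⟩
      intro hcv
      have := congrArg Fin.val hcv
      simp [hemb, hv] at this
      omega
    · rintro ⟨hbv, hadj⟩
      have hblt : b.val < n - 1 := by
        have h1 : b.val ≠ n - 1 := fun h => hbv (Fin.ext h)
        have := b.isLt
        omega
      refine ⟨⟨b.val, hblt⟩, ?_, Fin.ext rfl⟩
      show H.Adj (emb a) (emb ⟨b.val, hblt⟩)
      rwa [show emb ⟨b.val, hblt⟩ = b from Fin.ext rfl]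
  have hvmem : ∀ a : Fin (n - 1), v ∈ H.neighborFinset (emb a) ↔ a.val < k := by
    intro a
    rw [SimpleGraph.mem_neighborFinset]
    constructor
    · intro h
      exact (hHadj (emb a)).mp (H.adj_symm h)
    · intro h
      exact H.adj_symm ((hHadj (emb a)).mpr h)
  have hdeg' : ∀ a : Fin (n - 1), G'.degree a = s' a := by
    intro a
    have hcard : G'.degree a = ((H.neighborFinset (emb a)).erase v).card := by
      rw [SimpleGraph.degree, ← key a, Finset.card_image_of_injective _ hembinj]
    rw [hcard, hs' a]
    by_cases hak : a.val + 1 ≤ k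
    · rw [if_pos hak, Finset.card_erase_of_mem ((hvmem a).mpr (by omega))]
      congr 1
      exact hHdeg (emb a)
    · rw [if_neg hak, Finset.erase_eq_of_notMem (fun h => hak (by
        have := (hvmem a).mp h; omega))]
      exact hHdeg (emb a)
  refine ⟨⟨G', instG', hdeg'⟩, ?_⟩
  -- sum bound
  have himg : Finset.image emb univ = (univ : Finset (Fin n)).erase v := by
    apply Finset.eq_of_subset_of_card_le
    · intro b hb
      obtain ⟨c, _, rfl⟩ := Finset.mem_image.mp hb
      refine Finset.mem_erase.mpr ⟨?_, Finset.mem_univ _⟩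
      intro h
      have := congrArg Fin.val h
      simp [hemb, hv] at this
      omega
    · rw [Finset.card_erase_of_mem (Finset.mem_univ v),
        Finset.card_image_of_injective _ hembinj]
      simp
  have hT : ∑ j : Fin (n-1), s (emb j) + k = ∑ i : Fin n, s i := by
    have h1 : ∑ j : Fin (n-1), s (emb j) = ∑ b ∈ (univ : Finset (Fin n)).erase v, s b := by
      rw [← himg, Finset.sum_image (fun x _ y _ h => hembinj h)]
    rw [h1, add_comm, Finset.add_sum_erase _ s (Finset.mem_univ v)]
  have hS : ∑ j, s' j + k = ∑ j : Fin (n-1), s (emb j) := by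
    have h1 : ∀ j : Fin (n-1), s' j + (if j.val < k then 1 else 0) = s (emb j) := by
      intro j
      rw [hs' j]
      by_cases hjk : j.val + 1 ≤ k
      · rw [if_pos hjk, if_pos (by omega)]
        have := hpos (emb j)
        have heq : s ⟨j.val, by omega⟩ = s (emb j) := rfl
        omega
      · rw [if_neg hjk, if_neg (by omega), add_zero]
    calc ∑ j, s' j + k
        = ∑ j, s' j + ∑ j : Fin (n-1), (if j.val < k then 1 else 0) := by
          congr 1
          rw [← Finset.sum_filter, Finset.sum_const, smul_eq_mul, mul_one,
            card_filter_val_lt (n-1) k (by omega)]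
      _ = ∑ j : Fin (n-1), (s' j + if j.val < k then 1 else 0) := by
          rw [Finset.sum_add_distrib]
      _ = ∑ j : Fin (n-1), s (emb j) := Finset.sum_congr rfl (fun j _ => h1 j)
  have hS2 : ∑ j, s' j + 2 * k = ∑ i : Fin n, s i := by omega
  have hk1 : 1 ≤ k := hpos v
  by_cases hk2 : 2 ≤ k
  · obtain ⟨m, rfl⟩ := Nat.exists_eq_add_of_le hn
    have hall : ∀ i : Fin (2+m), k ≤ s i := by
      intro i
      apply hmono
      rw [Fin.le_def]
      have := i.isLt
      show i.val ≤ 2 + m - 1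
      omega
    have hsum : (2+m) * k ≤ ∑ i, s i := by
      calc (2+m) * k = ∑ _i : Fin (2+m), k := by
            rw [Finset.sum_const, Finset.card_univ, Fintype.card_fin, smul_eq_mul, mul_comm]
        _ ≤ ∑ i, s i := Finset.sum_le_sum (fun i _ => hall i)
    have e1 : (2+m) * k = 2*k + m*k := by ring
    have e2 : m*2 ≤ m*k := Nat.mul_le_mul_left m hk2
    have hgoal : 2*m ≤ ∑ j, s' j := by linarith
    show 2 * (2 + m - 2) ≤ ∑ j, s' j
    rwa [Nat.add_sub_cancel_left]
  · have hE := conn_bound G hconn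
    have hh : ∑ i, G.degree i = 2 * #G.edgeFinset := G.sum_degrees_eq_twice_card_edges
    have hh2 : ∑ i, G.degree i = ∑ i, s i := Finset.sum_congr rfl fun i _ => hdeg i
    omega
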